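/- Let $\xi = (\xi_1, \xi_2, \xi_3) \in \mathbb{R}^3$ and $\xi_{S,3} \in \mathbb{R}$ with $\mu > 0$, $\lambda + 2\mu > 0$, $\rho > 0$, $\xi_3 > 0$, $\xi_{S,3} > 0$, $\xi_1^2 + \xi_2^2 + \xi_3^2 = \rho/(\lambda+2\mu)$ (i.e. $|\xi| = c_P^{-1}$), $\xi_1^2 + \xi_2^2 + \xi_{S,3}^2 = \rho/\mu$ (i.e. the S-covector has length $c_S^{-1}$), and $(\xi_1,\xi_2) \neq (0,0)$. Then the $4\times 4$ matrix $M_P(\xi) = \begin{pmatrix} -2\mu\xi_1\xi_3 & -\mu\xi_{S,3} & 0 & \mu\xi_1 \\ -2\mu\xi_2\xi_3 & 0 & -\mu\xi_{S,3} & \mu\xi_2 \\ \rho - 2\mu(\xi_1^2+\xi_2^2) & \lambda\xi_1 & \lambda\xi_2 & -(\lambda+2\mu)\xi_{S,3} \\ 0 & \xi_1 & \xi_2 & -\xi_{S,3} \end{pmatrix}$ is invertible. -/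

import Mathlib

theorem MP_invertible (μ lam rho ξ1 ξ2 ξ3 ξS3 : ℝ)
    (hμ : 0 < μ) (hlam : 0 < lam + 2 * μ) (hrho : 0 < rho)
    (hξ3 : 0 < ξ3) (hξS3 : 0 < ξS3)
    (hP : ξ1 ^ 2 + ξ2 ^ 2 + ξ3 ^ 2 = rho / (lam + 2 * μ))
    (hS : ξ1 ^ 2 + ξ2 ^ 2 + ξS3 ^ 2 = rho / μ)
    (htan : (ξ1, ξ2) ≠ (0, 0)) :
    IsUnit (!![-2 * μ * ξ1 * ξ3, -(μ * ξS3), 0, μ * ξ1;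
               -2 * μ * ξ2 * ξ3, 0, -(μ * ξS3), μ * ξ2;
               rho - 2 * μ * (ξ1 ^ 2 + ξ2 ^ 2), lam * ξ1, lam * ξ2, -((lam + 2 * μ) * ξS3);
               0, ξ1, ξ2, -ξS3] : Matrix (Fin 4) (Fin 4) ℝ) := by
  rw [Matrix.isUnit_iff_isUnit_det, isUnit_iff_ne_zero]
  have hrho' : rho = μ * (ξ1 ^ 2 + ξ2 ^ 2 + ξS3 ^ 2) := by
    field_simp at hS; linarith
  have hr : 0 < ξ1 ^ 2 + ξ2 ^ 2 := by
    have h1 : ξ1 ≠ 0 ∨ ξ2 ≠ 0 := by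
      by_contra h; push_neg at h; exact htan (by simp [h.1, h.2])
    rcases h1 with h1 | h1 <;>
      nlinarith [sq_nonneg ξ1, sq_nonneg ξ2, mul_self_pos.mpr h1]
  have hdet : (!![-2 * μ * ξ1 * ξ3, -(μ * ξS3), 0, μ * ξ1;
               -2 * μ * ξ2 * ξ3, 0, -(μ * ξS3), μ * ξ2;
               rho - 2 * μ * (ξ1 ^ 2 + ξ2 ^ 2), lam * ξ1, lam * ξ2, -((lam + 2 * μ) * ξS3);
               0, ξ1, ξ2, -ξS3] : Matrix (Fin 4) (Fin 4) ℝ).det =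
      -(μ ^ 3 * ξS3 * ((ξS3 ^ 2 - (ξ1 ^ 2 + ξ2 ^ 2)) ^ 2
        + 4 * (ξ1 ^ 2 + ξ2 ^ 2) * ξ3 * ξS3)) := by
    subst hrho'
    simp [Matrix.det_succ_row_zero, Fin.sum_univ_succ, Fin.succAbove,
      Matrix.cons_val_zero, Matrix.cons_val_one, Matrix.head_cons, Matrix.cons_val_fin_one]
    norm_num [Fin.castSucc, Fin.castAdd, Fin.castLE, Matrix.cons_val_zero, Matrix.cons_val_one,
      Matrix.head_cons, Matrix.cons_val_succ]
    ring
  rw [hdet]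
  have : 0 < (ξS3 ^ 2 - (ξ1 ^ 2 + ξ2 ^ 2)) ^ 2 + 4 * (ξ1 ^ 2 + ξ2 ^ 2) * ξ3 * ξS3 := by
    have h4 : 0 < 4 * (ξ1 ^ 2 + ξ2 ^ 2) * ξ3 * ξS3 := by positivity
    nlinarith [sq_nonneg (ξS3 ^ 2 - (ξ1 ^ 2 + ξ2 ^ 2))]
  have := mul_pos (mul_pos (pow_pos hμ 3) hξS3) this
  exact neg_ne_zero.mpr (ne_of_gt (by linarith))
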